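/- Let γ ∈ [−1,0] and U(x) := (1/2)ln(2/((1+γ)x² + 1−γ)). Then the quantity −(1−x²)²U'(x)² + 2x(1−x²)U'(x) + 2λ₁e^{4U(x)}(1−x²)² − x² + γ(1−x²)e^{2U(x)} equals −1 for all x ∈ (−1,1), where λ₁ = (γ²−1)/8. -/

import Mathlib

open Real Set

/-- For γ ∈ [−1,0] and U(x) := (1/2)ln(2/((1+γ)x²+1−γ)), the first
integral −(1−x²)²U'² + 2x(1−x²)U' + 2λ₁e^{4U}(1−x²)² − x² + γ(1−x²)e^{2U}
equals −1 on (−1,1), where λ₁ = (γ²−1)/8. -/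
theorem stmt_18 (γ : ℝ) (hγ : γ ∈ Icc (-1:ℝ) 0) (U : ℝ → ℝ)
    (hU : U = fun x => (1/2) * Real.log (2 / ((1 + γ) * x^2 + 1 - γ)))
    (lam₁ : ℝ) (hlam₁ : lam₁ = (γ^2 - 1) / 8) :
    ∀ x ∈ Ioo (-1:ℝ) 1,
      -(1 - x^2)^2 * (deriv U x)^2 + 2 * x * (1 - x^2) * deriv U x
        + 2 * lam₁ * Real.exp (4 * U x) * (1 - x^2)^2 - x^2
        + γ * (1 - x^2) * Real.exp (2 * U x) = -1 := by
  intro x hx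
  have hDall : ∀ y : ℝ, 0 < (1 + γ) * y^2 + 1 - γ := by
    intro y
    nlinarith [sq_nonneg y, hγ.1, hγ.2]
  have hD := hDall x
  have hDne : (1 + γ) * x^2 + 1 - γ ≠ 0 := ne_of_gt hD
  -- rewrite U
  have hUeq : U = fun y => (1/2) * (Real.log 2 - Real.log ((1 + γ) * y^2 + 1 - γ)) := by
    rw [hU]; funext y
    rw [Real.log_div (by norm_num) (ne_of_gt (hDall y))]
  -- derivative of D
  have hD1 : HasDerivAt (fun y : ℝ => (1 + γ) * y^2 + 1 - γ) ((1 + γ) * (2 * x)) x := by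
    have h := ((hasDerivAt_pow 2 x).const_mul (1 + γ)).add_const (1 - γ)
    have heq : (fun y : ℝ => (1 + γ) * y^2 + (1 - γ)) = fun y => (1 + γ) * y^2 + 1 - γ := by
      funext y; ring
    rw [heq] at h
    exact h.congr_deriv (by norm_num)
  have hlog : HasDerivAt (fun y : ℝ => Real.log ((1 + γ) * y^2 + 1 - γ))
      (((1 + γ) * (2 * x)) / ((1 + γ) * x^2 + 1 - γ)) x := hD1.log hDne
  have hUd : HasDerivAt U
      ((1/2) * (-(((1 + γ) * (2 * x)) / ((1 + γ) * x^2 + 1 - γ)))) x := by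
    rw [hUeq]
    have h := (hlog.const_sub (Real.log 2)).const_mul (1/2)
    convert h using 1
  have hderiv : deriv U x = (1/2) * (-(((1 + γ) * (2 * x)) / ((1 + γ) * x^2 + 1 - γ))) :=
    hUd.deriv
  -- exponentials
  have hratio : (0:ℝ) < 2 / ((1 + γ) * x^2 + 1 - γ) := by positivity
  have hUx : U x = (1/2) * Real.log (2 / ((1 + γ) * x^2 + 1 - γ)) := by rw [hU]
  have he2 : Real.exp (2 * U x) = 2 / ((1 + γ) * x^2 + 1 - γ) := by
    rw [hUx]
    rw [show 2 * ((1/2) * Real.log (2 / ((1 + γ) * x^2 + 1 - γ))) =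
        Real.log (2 / ((1 + γ) * x^2 + 1 - γ)) by ring]
    exact Real.exp_log hratio
  have he4 : Real.exp (4 * U x) = (2 / ((1 + γ) * x^2 + 1 - γ))^2 := by
    rw [show (4:ℝ) * U x = 2 * U x + 2 * U x by ring, Real.exp_add, he2]; ring
  rw [hderiv, he2, he4, hlam₁]
  field_simp
  have hD' : x ^ 2 * (1 + γ) + 1 - γ ≠ 0 := ne_of_gt (by linarith)
  field_simp
  ring
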